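/- Let ℓ be a positive integer, let K = ℚ(ζ) be the 2ℓ-th cyclotomic field (CyclotomicField (2ℓ) ℚ) with ζ ∈ K a primitive 2ℓ-th root of unity. Then for every integer q, the field norm from K to ℚ satisfies: N_{K/ℚ}((q : K) − ζ²) = Φ_ℓ(q) if ℓ is odd, and N_{K/ℚ}((q : K) − ζ²) = Φ_ℓ(q)² if ℓ is even. -/

import Mathlib

open Polynomial Finset

section Aux

variable {E : Type*} [Field E]

/-- The square of a primitive `2ℓ`-th root of unity is a primitive `ℓ`-th root of unity. -/
lemma aux_sq_prim {ℓ : ℕ} (hℓ : 0 < ℓ) {η : E} (h : IsPrimitiveRoot η (2 * ℓ)) :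
    IsPrimitiveRoot (η ^ 2) ℓ :=
  h.pow (by positivity) rfl

/-- If `ℓ` is even and `η ^ 2` is a primitive `ℓ`-th root of unity, then `η` is a
primitive `2ℓ`-th root of unity. -/
lemma aux_prim_of_sq {ℓ : ℕ} (hle : Even ℓ) (hℓ : 0 < ℓ) {η : E}
    (h : IsPrimitiveRoot (η ^ 2) ℓ) : IsPrimitiveRoot η (2 * ℓ) := by
  have hfin : IsOfFinOrder η := by
    refine isOfFinOrder_iff_pow_eq_one.2 ⟨2 * ℓ, by positivity, ?_⟩
    rw [pow_mul, h.pow_eq_one]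
  have hd : orderOf η / Nat.gcd (orderOf η) 2 = ℓ := by
    rw [← orderOf_pow' η (two_ne_zero), ← h.eq_orderOf]
  have hdpos : 0 < orderOf η := hfin.orderOf_pos
  have h2 : Nat.gcd (orderOf η) 2 = 2 := by
    rcases Nat.even_or_odd (orderOf η) with he | ho
    · rw [Nat.gcd_comm]
      exact Nat.gcd_eq_left he.two_dvd
    · exfalso
      have hcop : Nat.gcd (orderOf η) 2 = 1 := ho.coprime_two_right
      rw [hcop, Nat.div_one] at hd
      exact (Nat.not_odd_iff_even.2 (hd ▸ hle)) ho
  have h2d : 2 ∣ orderOf η := h2 ▸ Nat.gcd_dvd_left _ _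
  have hord : orderOf η = 2 * ℓ := by
    rw [h2] at hd
    omega
  exact hord ▸ IsPrimitiveRoot.orderOf η

/-- If `ℓ` is odd, squaring is injective on primitive `2ℓ`-th roots of unity. -/
lemma aux_sq_inj {ℓ : ℕ} (hlo : Odd ℓ) {η η' : E}
    (h : IsPrimitiveRoot η (2 * ℓ)) (h' : IsPrimitiveRoot η' (2 * ℓ))
    (hsq : η ^ 2 = η' ^ 2) : η = η' := by
  have h0 : 0 < ℓ := hlo.pos
  have hz : (η' - η) * (η' + η) = 0 := by
    have : η' ^ 2 - η ^ 2 = 0 := by rw [hsq, sub_self]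
    calc (η' - η) * (η' + η) = η' ^ 2 - η ^ 2 := by ring
      _ = 0 := this
  rcases mul_eq_zero.1 hz with h1 | h1
  · exact (sub_eq_zero.1 h1).symm
  · exfalso
    have hη' : η' = -η := eq_neg_of_add_eq_zero_left h1
    have hl : η ^ ℓ = -1 := by
      have hsq1 : (η ^ ℓ - 1) * (η ^ ℓ + 1) = 0 := by
        have : η ^ (2 * ℓ) = 1 := h.pow_eq_one
        calc (η ^ ℓ - 1) * (η ^ ℓ + 1) = η ^ (2 * ℓ) - 1 := by
              rw [two_mul, pow_add]; ring
          _ = 0 := by rw [this, sub_self]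
      rcases mul_eq_zero.1 hsq1 with h2 | h2
      · exact absurd (sub_eq_zero.1 h2)
          (h.pow_ne_one_of_pos_of_lt h0.ne' (by omega))
      · exact eq_neg_of_add_eq_zero_left h2
    have hpow : η' = η ^ (ℓ + 1) := by
      rw [hη', pow_succ, hl, neg_one_mul]
    have hcop : Nat.Coprime (ℓ + 1) (2 * ℓ) :=
      (h.pow_iff_coprime (by positivity) (ℓ + 1)).1 (hpow ▸ h')
    have h2d : (2 : ℕ) ∣ Nat.gcd (ℓ + 1) (2 * ℓ) := by
      obtain ⟨k, hk⟩ := hlo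
      exact Nat.dvd_gcd ⟨k + 1, by omega⟩ ⟨ℓ, rfl⟩
    rw [Nat.Coprime] at hcop
    rw [hcop] at h2d
    omega

end Aux

/-- Let `K = ℚ(ζ)` be the `2ℓ`-th cyclotomic field, with `ζ` a primitive `2ℓ`-th root of
unity.  Then for every integer `q`, the field norm satisfies
`N_{K/ℚ}(q - ζ²) = Φ_ℓ(q)` if `ℓ` is odd, and `N_{K/ℚ}(q - ζ²) = Φ_ℓ(q)²` if `ℓ` is even. -/
theorem norm_int_sub_primitiveRoot_sq (ℓ : ℕ) (hℓ : 0 < ℓ) (n : ℕ+) (hn : (n : ℕ) = 2 * ℓ)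
    (ζ : CyclotomicField n ℚ) (hζ : IsPrimitiveRoot ζ (2 * ℓ)) (q : ℤ) :
    (Odd ℓ →
      Algebra.norm ℚ ((q : CyclotomicField n ℚ) - ζ ^ 2) =
        ((((Polynomial.cyclotomic ℓ ℤ).eval q : ℤ) : ℚ))) ∧
    (Even ℓ →
      Algebra.norm ℚ ((q : CyclotomicField n ℚ) - ζ ^ 2) =
        ((((Polynomial.cyclotomic ℓ ℤ).eval q : ℤ) : ℚ)) ^ 2) := by
  classical
  have hirr : Irreducible (cyclotomic n ℚ) := cyclotomic.irreducible_rat n.pos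
  have hζn : IsPrimitiveRoot ζ (n : ℕ) := (congrArg (IsPrimitiveRoot ζ) hn).mpr hζ
  let K := CyclotomicField n ℚ
  let E := AlgebraicClosure K
  haveI : IsCyclotomicExtension {(n : ℕ)} ℚ K := CyclotomicField.isCyclotomicExtension _ _
  haveI : FiniteDimensional ℚ K := IsCyclotomicExtension.finiteDimensional {(n : ℕ)} ℚ K
  -- the primitive root in `E`
  set ζE : E := algebraMap K E ζ with hζE_def
  have hζE : IsPrimitiveRoot ζE (2 * ℓ) := hζ.map_of_injective (algebraMap K E).injective
  have hζE2 : IsPrimitiveRoot (ζE ^ 2) ℓ := aux_sq_prim hℓ hζE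
  -- the norm as a product over primitive roots
  have key : (algebraMap ℚ E) (Algebra.norm ℚ ((q : CyclotomicField n ℚ) - ζ ^ 2)) =
      ∏ η ∈ primitiveRoots (2 * ℓ) E, ((q : E) - η ^ 2) := by
    rw [Algebra.norm_eq_prod_embeddings, ← hn,
      ← Finset.prod_attach (primitiveRoots (n : ℕ) E) (fun η => (q : E) - η ^ 2),
      ← Finset.univ_eq_attach]
    exact Fintype.prod_equiv (hζn.embeddingsEquivPrimitiveRoots E hirr) _ _ fun σ => by simp
  -- the cyclotomic product
  have hcyc : ∏ μ ∈ primitiveRoots ℓ E, ((q : E) - μ) =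
      (((cyclotomic ℓ ℤ).eval q : ℤ) : E) := by
    have h2 : (cyclotomic ℓ E).eval (q : E) = ∏ μ ∈ primitiveRoots ℓ E, ((q : E) - μ) := by
      rw [cyclotomic_eq_prod_X_sub_primitiveRoots hζE2, eval_prod]
      simp
    rw [← h2, ← map_cyclotomic_int, eval_intCast_map, eq_intCast]
    norm_num
  constructor
  · -- odd case
    intro hlo
    apply (algebraMap ℚ E).injective
    rw [key, map_intCast, ← hcyc]
    have hinj : ∀ a ∈ primitiveRoots (2 * ℓ) E, ∀ b ∈ primitiveRoots (2 * ℓ) E,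
        a ^ 2 = b ^ 2 → a = b := fun a ha b hb hab =>
      aux_sq_inj hlo ((mem_primitiveRoots (by positivity)).1 ha)
        ((mem_primitiveRoots (by positivity)).1 hb) hab
    have himg : (primitiveRoots (2 * ℓ) E).image (fun η => η ^ 2) = primitiveRoots ℓ E := by
      apply Finset.eq_of_subset_of_card_le
      · intro x hx
        obtain ⟨η, hη, rfl⟩ := Finset.mem_image.1 hx
        exact (mem_primitiveRoots hℓ).2
          (aux_sq_prim hℓ ((mem_primitiveRoots (by positivity)).1 hη))
      · rw [Finset.card_image_of_injOn hinj, hζE.card_primitiveRoots,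
          hζE2.card_primitiveRoots, Nat.totient_mul
            (hlo.coprime_two_left), Nat.totient_two, one_mul]
    rw [← himg, Finset.prod_image hinj]
  · -- even case
    intro hle
    apply (algebraMap ℚ E).injective
    rw [key, map_pow, map_intCast, ← hcyc]
    have hmap : ∀ η ∈ primitiveRoots (2 * ℓ) E, η ^ 2 ∈ primitiveRoots ℓ E := fun η hη =>
      (mem_primitiveRoots hℓ).2 (aux_sq_prim hℓ ((mem_primitiveRoots (by positivity)).1 hη))
    rw [← Finset.prod_fiberwise_of_maps_to' hmap (fun μ => (q : E) - μ), ← Finset.prod_pow]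
    refine Finset.prod_congr rfl fun μ hμ => ?_
    rw [Finset.prod_const]
    congr 1
    -- the fiber over `μ` has exactly two elements
    have hμp : IsPrimitiveRoot μ ℓ := (mem_primitiveRoots hℓ).1 hμ
    obtain ⟨η₀, hη₀⟩ : ∃ η₀ : E, η₀ ^ 2 = μ := by
      obtain ⟨z, hz⟩ := IsAlgClosed.exists_pow_nat_eq μ (zero_lt_two)
      exact ⟨z, hz⟩
    have hη₀2 : IsPrimitiveRoot (η₀ ^ 2) ℓ := hη₀ ▸ hμp
    have hη₀p : IsPrimitiveRoot η₀ (2 * ℓ) := aux_prim_of_sq hle hℓ hη₀2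
    have hη₀ne : η₀ ≠ -η₀ := by
      intro h
      have h0 : η₀ = 0 := by
        have : (2 : E) * η₀ = 0 := by linear_combination h
        rcases mul_eq_zero.1 this with h' | h'
        · exact absurd h' two_ne_zero
        · exact h'
      have : μ = 0 := by rw [← hη₀, h0]; ring
      exact hμp.ne_zero hℓ.ne' this
    have hfe : (primitiveRoots (2 * ℓ) E).filter (fun η => η ^ 2 = μ) = {η₀, -η₀} := by
      ext x
      simp only [Finset.mem_filter, Finset.mem_insert, Finset.mem_singleton]
      constructor
      · rintro ⟨-, hx⟩
        have hz : (x - η₀) * (x + η₀) = 0 := by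
          calc (x - η₀) * (x + η₀) = x ^ 2 - η₀ ^ 2 := by ring
            _ = 0 := by rw [hx, hη₀, sub_self]
        rcases mul_eq_zero.1 hz with h' | h'
        · exact Or.inl (sub_eq_zero.1 h')
        · exact Or.inr (eq_neg_of_add_eq_zero_left h')
      · rintro (rfl | rfl)
        · exact ⟨(mem_primitiveRoots (by positivity)).2 hη₀p, hη₀⟩
        · refine ⟨(mem_primitiveRoots (by positivity)).2
            (aux_prim_of_sq hle hℓ ?_), by rw [neg_sq]; exact hη₀⟩
          rw [neg_sq]
          exact hη₀2
    rw [hfe, Finset.card_insert_of_notMem (by simpa using hη₀ne), Finset.card_singleton]
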